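/- Let G be a group, δ > 0, and f, g : G → ℂ with |f(x*y) − f(x)·g(y)| ≤ δ for all x, y ∈ G. If g is unbounded and f ≠ 0, then f(x*y) = f(x)·g(y) for all x, y ∈ G. -/

import Mathlib

theorem stmt_12 (G : Type*) [Group G] (δ : ℝ) (hδ : 0 < δ) (f g : G → ℂ)
    (h : ∀ x y : G, ‖f (x * y) - f x * g y‖ ≤ δ)
    (hg : ∀ M : ℝ, ∃ z : G, M < ‖g z‖) (hf : f ≠ 0) :
    ∀ x y : G, f (x * y) = f x * g y := by
  obtain ⟨x0, hx0⟩ : ∃ x0, f x0 ≠ 0 := by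
    by_contra hc
    push_neg at hc
    exact hf (funext hc)
  -- key 2δ estimate
  have key : ∀ x y z : G, ‖f (x*y) * g z - f x * g (y*z)‖ ≤ 2*δ := by
    intro x y z
    have h1 := h (x*y) z
    have h2 := h x (y*z)
    have e : f (x*(y*z)) = f (x*y*z) := by rw [mul_assoc]
    rw [e] at h2
    have eq1 : f (x*y) * g z - f x * g (y*z)
        = (f (x*y*z) - f x * g (y*z)) + (-(f (x*y*z) - f (x*y) * g z)) := by ring
    rw [eq1]
    calc ‖(f (x*y*z) - f x * g (y*z)) + (-(f (x*y*z) - f (x*y) * g z))‖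
        ≤ ‖f (x*y*z) - f x * g (y*z)‖
          + ‖-(f (x*y*z) - f (x*y) * g z)‖ := norm_add_le _ _
      _ = ‖f (x*y*z) - f x * g (y*z)‖
          + ‖f (x*y*z) - f (x*y) * g z‖ := by rw [norm_neg]
      _ ≤ 2*δ := by linarith
  -- step 1 : f(xy) * f(x0) = f(x) * f(x0 y)
  have step1 : ∀ x y : G, f (x*y) * f x0 = f x * f (x0*y) := by
    intro x y
    by_contra hA
    set A := f (x*y) * f x0 - f x * f (x0*y) with hAdef
    have hAne : A ≠ 0 := sub_ne_zero.mpr hA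
    have hApos : 0 < ‖A‖ := by
      simpa using (norm_pos_iff.mpr hAne)
    set C : ℝ := 2*δ*(‖f x0‖ + ‖f x‖) with hC
    have bound : ∀ z : G, ‖A‖ * ‖g z‖ ≤ C := by
      intro z
      have k1 := key x y z
      have k2 := key x0 y z
      have eq2 : A * g z
          = f x0 * (f (x*y) * g z - f x * g (y*z))
            + (-(f x * (f (x0*y) * g z - f x0 * g (y*z)))) := by
        rw [hAdef]; ring
      have : ‖A * g z‖ ≤ C := by
        rw [eq2]
        calc ‖_‖ ≤ ‖f x0 * (f (x*y) * g z - f x * g (y*z))‖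
              + ‖-(f x * (f (x0*y) * g z - f x0 * g (y*z)))‖ :=
              norm_add_le _ _
          _ = ‖f x0‖ * ‖f (x*y) * g z - f x * g (y*z)‖
              + ‖f x‖ * ‖f (x0*y) * g z - f x0 * g (y*z)‖ := by
              rw [norm_neg, norm_mul, norm_mul]
          _ ≤ ‖f x0‖ * (2*δ) + ‖f x‖ * (2*δ) := by
              have := norm_nonneg (f x0)
              have := norm_nonneg (f x)
              nlinarith
          _ = C := by rw [hC]; ring
      simpa [norm_mul] using this
    obtain ⟨z, hz⟩ := hg (C / ‖A‖)
    have := bound z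
    rw [div_lt_iff₀ hApos] at hz
    nlinarith
  -- step 2 : f(x0 y) = g y * f x0
  have step2 : ∀ y : G, f (x0*y) = g y * f x0 := by
    intro y
    by_contra hB
    set B := f (x0*y) - g y * f x0 with hBdef
    have hBne : B ≠ 0 := sub_ne_zero.mpr hB
    have hBpos : 0 < ‖B‖ := norm_pos_iff.mpr hBne
    have hx0pos : 0 < ‖f x0‖ := norm_pos_iff.mpr hx0
    have fbound : ∀ x : G, ‖f x‖ ≤ ‖f x0‖ * δ / ‖B‖ := by
      intro x
      have eq3 : f x * B = f x0 * (f (x*y) - f x * g y) := by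
        rw [hBdef]
        have := step1 x y
        linear_combination -this
      have h1 := h x y
      have : ‖f x‖ * ‖B‖ ≤ ‖f x0‖ * δ := by
        have := congrArg (‖·‖) eq3
        rw [norm_mul, norm_mul] at this
        rw [this]
        have := norm_nonneg (f x0)
        nlinarith
      rw [le_div_iff₀ hBpos]
      exact this
    -- but f is unbounded since g is
    obtain ⟨z, hz⟩ := hg ((‖f x0‖ * δ / ‖B‖ + δ) / ‖f x0‖)
    rw [div_lt_iff₀ hx0pos] at hz
    have h1 := h x0 z
    have h2 := fbound (x0*z)
    have h3 : ‖f x0 * g z‖ - ‖f (x0*z)‖ ≤ δ := by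
      have := norm_sub_le (f (x0*z)) (f x0 * g z)
      have tri : ‖f x0 * g z‖ ≤ ‖f (x0*z)‖
          + ‖f (x0*z) - f x0 * g z‖ := by
        calc ‖f x0 * g z‖
            = ‖f (x0*z) + (-(f (x0*z) - f x0 * g z))‖ := by ring_nf
          _ ≤ ‖f (x0*z)‖ + ‖-(f (x0*z) - f x0 * g z)‖ :=
              norm_add_le _ _
          _ = ‖f (x0*z)‖ + ‖f (x0*z) - f x0 * g z‖ := by
              rw [norm_neg]
      linarith
    rw [norm_mul] at h3
    nlinarith
  intro x y
  have := step1 x y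
  rw [step2 y] at this
  have : f (x*y) * f x0 = (f x * g y) * f x0 := by linear_combination this
  exact mul_right_cancel₀ hx0 this
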